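/- Let ε, δ ∈ (0,1), let n ≥ 1 be a natural number, and set b = 1 + (εδ)². Let C be distributed according to morris(b, n) and let ñ = (b^C − b)/(b − 1) + 1. Then P(|ñ − n| > εn) ≤ δ. -/

import Mathlib

open scoped ENNReal
open MeasureTheory

/-- A coin flip returning `true` with probability `min p 1`. -/
noncomputable def coin (p : ℝ≥0∞) : PMF Bool := PMF.bernoulli (min p 1).toNNReal
  (by simpa using ENNReal.toNNReal_mono ENNReal.one_ne_top (min_le_right p 1))

/-- The Morris counter distribution with base `b` after `n` increments: starting from `0`,
each increment raises a counter `c` to `c + 1` with probability `b ^ (-c)`. -/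
noncomputable def morris (b : ℝ) : ℕ → PMF ℕ
  | 0 => PMF.pure 0
  | n + 1 => (morris b n).bind fun c =>
      (coin (ENNReal.ofReal (b ^ (-(c : ℝ))))).bind fun h =>
        PMF.pure (if h then c + 1 else c)

namespace MorrisAux

lemma coin_true (p : ℝ≥0∞) (hp : p ≤ 1) : coin p true = p := by
  simp [coin, PMF.bernoulli_apply, min_eq_left hp, ENNReal.coe_toNNReal (ne_top_of_le_ne_top ENNReal.one_ne_top hp)]

lemma coin_false (p : ℝ≥0∞) (hp : p ≤ 1) : coin p false = 1 - p := by
  simp [coin, PMF.bernoulli_apply, min_eq_left hp, ENNReal.coe_toNNReal (ne_top_of_le_ne_top ENNReal.one_ne_top hp)]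

lemma tsum_pure {α : Type*} (x : α) (f : α → ℝ≥0∞) :
    ∑' a, (PMF.pure x) a * f a = f x := by
  rw [tsum_eq_single x]
  · simp [PMF.pure_apply]
  · intro a ha; simp [PMF.pure_apply, ha]

lemma tsum_bind {α β : Type*} (p : PMF α) (k : α → PMF β) (f : β → ℝ≥0∞) :
    ∑' c, (p.bind k) c * f c = ∑' a, p a * ∑' c, k a c * f c := by
  simp only [PMF.bind_apply]
  calc ∑' c, (∑' a, p a * k a c) * f c
      = ∑' c, ∑' a, p a * (k a c * f c) := by
        congr 1; ext c; rw [← ENNReal.tsum_mul_right]; congr 1; ext a; ring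
    _ = ∑' a, ∑' c, p a * (k a c * f c) := ENNReal.tsum_comm
    _ = ∑' a, p a * ∑' c, k a c * f c := by
        congr 1; ext a; rw [ENNReal.tsum_mul_left]

variable {b : ℝ}

noncomputable def t (b : ℝ) (a : ℕ) : ℝ≥0∞ := ENNReal.ofReal (b ^ (-(a : ℝ)))

lemma t_le_one (hb : 1 ≤ b) (a : ℕ) : t b a ≤ 1 := by
  rw [t, ENNReal.ofReal_le_one]
  exact Real.rpow_le_one_of_one_le_of_nonpos hb (by simp)

lemma t_mul_pow (hb : 1 ≤ b) (a k : ℕ) (hk : a ≤ k) :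
    t b a * ENNReal.ofReal (b ^ k) = ENNReal.ofReal (b ^ (k - a)) := by
  have hb0 : 0 < b := lt_of_lt_of_le one_pos hb
  rw [t, ← ENNReal.ofReal_mul (by positivity)]
  congr 1
  rw [← Real.rpow_natCast b k, ← Real.rpow_natCast b (k - a),
    ← Real.rpow_add hb0]
  congr 1
  push_cast [hk]
  ring

lemma transfer (n : ℕ) (f : ℕ → ℝ≥0∞) (hb : 1 ≤ b) :
    ∑' c, morris b (n+1) c * f c
      = ∑' a, morris b n a * (t b a * f (a+1) + (1 - t b a) * f a) := by
  rw [show morris b (n+1) = (morris b n).bind fun c =>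
      (coin (ENNReal.ofReal (b ^ (-(c : ℝ))))).bind fun h =>
        PMF.pure (if h then c + 1 else c) from rfl, tsum_bind]
  congr 1; ext a
  congr 1
  rw [tsum_bind]
  rw [tsum_bool]
  simp only [tsum_pure, if_true, if_false]
  rw [show ENNReal.ofReal (b ^ (-(a:ℝ))) = t b a from rfl,
    coin_true _ (t_le_one hb a), coin_false _ (t_le_one hb a)]
  simp only [Bool.false_eq_true, if_false]
  ring

lemma tsum_const (p : PMF ℕ) (x : ℝ≥0∞) : ∑' c, p c * x = x := by
  rw [ENNReal.tsum_mul_right, p.tsum_coe, one_mul]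

lemma pow_aux {b : ℝ} (hb : 1 ≤ b) (a : ℕ) : (1:ℝ≥0∞) ≤ ENNReal.ofReal (b ^ a) := by
  rw [show (1:ℝ≥0∞) = ENNReal.ofReal 1 by simp]
  exact ENNReal.ofReal_le_ofReal (one_le_pow₀ hb)

lemma t_mul_self {b : ℝ} (hb : 1 ≤ b) (a : ℕ) :
    t b a * ENNReal.ofReal (b ^ a) = 1 := by
  rw [t_mul_pow hb a a le_rfl]; simp

lemma one_sub_t_mul {b : ℝ} (hb : 1 ≤ b) (a : ℕ) (x : ℝ) :
    (1 - t b a) * ENNReal.ofReal x = ENNReal.ofReal x - t b a * ENNReal.ofReal x := by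
  rw [ENNReal.sub_mul fun _ _ => ENNReal.ofReal_ne_top, one_mul]

lemma M1 {b : ℝ} (hb : 1 ≤ b) (n : ℕ) :
    ∑' c, morris b n c * ENNReal.ofReal (b ^ c) = ENNReal.ofReal (1 + n * (b - 1)) := by
  induction n with
  | zero =>
    rw [show morris b 0 = PMF.pure 0 from rfl, tsum_pure]
    simp
  | succ n ih =>
    rw [transfer n _ hb]
    have key : ∀ a : ℕ, t b a * ENNReal.ofReal (b ^ (a+1)) + (1 - t b a) * ENNReal.ofReal (b ^ a)
        = ENNReal.ofReal (b ^ a) + ENNReal.ofReal (b - 1) := by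
      intro a
      rw [one_sub_t_mul hb, t_mul_self hb, t_mul_pow hb a (a+1) (by omega)]
      rw [show a + 1 - a = 1 by omega, pow_one]
      rw [show ENNReal.ofReal b = ENNReal.ofReal (b-1) + 1 by
        rw [show (1:ℝ≥0∞) = ENNReal.ofReal 1 by simp,
          ← ENNReal.ofReal_add (by linarith) (by norm_num)]; ring_nf]
      rw [add_assoc, add_comm (1:ℝ≥0∞) (ENNReal.ofReal (b ^ a) - 1),
        tsub_add_cancel_of_le (pow_aux hb a), add_comm]
    simp_rw [key, mul_add, ENNReal.tsum_add, ih, tsum_const]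
    rw [← ENNReal.ofReal_add (by nlinarith [Nat.cast_nonneg (α := ℝ) n]) (by linarith)]
    congr 1
    push_cast
    ring

lemma nat_pred_nonneg (n : ℕ) : 0 ≤ (n:ℝ) * ((n:ℝ) - 1) := by
  rcases Nat.eq_zero_or_pos n with h | h
  · simp [h]
  · have : (1:ℝ) ≤ (n:ℝ) := by exact_mod_cast h
    nlinarith

lemma M2 {b : ℝ} (hb : 1 ≤ b) (n : ℕ) :
    ∑' c, morris b n c * ENNReal.ofReal (b ^ (2*c))
      = ENNReal.ofReal (1 + n * (b^2 - 1) + (b^2-1)*(b-1)*((n:ℝ)*((n:ℝ)-1))/2) := by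
  have hb2 : (0:ℝ) ≤ b^2 - 1 := by nlinarith
  induction n with
  | zero =>
    rw [show morris b 0 = PMF.pure 0 from rfl, tsum_pure]
    norm_num
  | succ n ih =>
    rw [transfer n _ hb]
    have key : ∀ a : ℕ, t b a * ENNReal.ofReal (b ^ (2*(a+1))) + (1 - t b a) * ENNReal.ofReal (b ^ (2*a))
        = ENNReal.ofReal (b ^ (2*a)) + ENNReal.ofReal ((b^2-1) * b^a) := by
      intro a
      rw [one_sub_t_mul hb, t_mul_pow hb a (2*a) (by omega), t_mul_pow hb a (2*(a+1)) (by omega),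
        show 2*a - a = a by omega, show 2*(a+1) - a = a + 2 by omega]
      rw [show ENNReal.ofReal (b ^ (a+2)) = ENNReal.ofReal ((b^2-1) * b^a) + ENNReal.ofReal (b^a) by
        rw [← ENNReal.ofReal_add (by positivity) (by positivity)]; congr 1; ring]
      rw [add_assoc, add_comm (ENNReal.ofReal (b^a)) (ENNReal.ofReal (b ^ (2*a)) - ENNReal.ofReal (b^a)),
        tsub_add_cancel_of_le (ENNReal.ofReal_le_ofReal (pow_le_pow_right₀ hb (by omega))),
        add_comm]
    simp_rw [key, mul_add, ENNReal.tsum_add, ih]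
    have : ∑' a, morris b n a * ENNReal.ofReal ((b^2-1) * b^a)
        = ENNReal.ofReal ((b^2-1) * (1 + n * (b-1))) := by
      simp_rw [ENNReal.ofReal_mul hb2, mul_left_comm (morris b n _)]
      rw [ENNReal.tsum_mul_left, M1 hb n, ← ENNReal.ofReal_mul hb2]
    have h1 : (0:ℝ) ≤ (n:ℝ) * (b^2-1) := mul_nonneg (Nat.cast_nonneg n) hb2
    have h2 : (0:ℝ) ≤ (b^2-1)*(b-1)*((n:ℝ)*((n:ℝ)-1))/2 :=
      div_nonneg (mul_nonneg (mul_nonneg hb2 (by linarith)) (nat_pred_nonneg n)) (by norm_num)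
    have h3 : (0:ℝ) ≤ 1 + (n:ℝ)*(b-1) := by
      have := mul_nonneg (Nat.cast_nonneg (α := ℝ) n) (show (0:ℝ) ≤ b - 1 by linarith)
      linarith
    rw [this, ← ENNReal.ofReal_add (by linarith) (mul_nonneg hb2 h3)]
    congr 1
    push_cast
    ring

lemma Mvar {b : ℝ} (hb : 1 ≤ b) (n : ℕ) :
    ∑' c, morris b n c * ENNReal.ofReal ((b^c - (1 + (n:ℝ)*(b-1)))^2)
      = ENNReal.ofReal ((b-1)^3 * ((n:ℝ)*((n:ℝ)-1))/2) := by
  have hb1 : (0:ℝ) ≤ b - 1 := by linarith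
  have hM : (0:ℝ) ≤ 1 + (n:ℝ)*(b-1) := by
    have := mul_nonneg (Nat.cast_nonneg (α := ℝ) n) hb1; linarith
  have hVc : (0:ℝ) ≤ (b-1)^3 * ((n:ℝ)*((n:ℝ)-1))/2 :=
    div_nonneg (mul_nonneg (pow_nonneg hb1 3) (nat_pred_nonneg n)) (by norm_num)
  rw [← ENNReal.add_right_inj (a := ENNReal.ofReal (2*(1 + (n:ℝ)*(b-1))*(1 + (n:ℝ)*(b-1))))
    ENNReal.ofReal_ne_top]
  have hpt : ∀ c : ℕ,
      ENNReal.ofReal (2*(1 + (n:ℝ)*(b-1))) * (morris b n c * ENNReal.ofReal (b^c))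
        + morris b n c * ENNReal.ofReal ((b^c - (1 + (n:ℝ)*(b-1)))^2)
      = morris b n c * ENNReal.ofReal (b^(2*c)) + morris b n c * ENNReal.ofReal ((1 + (n:ℝ)*(b-1))^2) := by
    intro c
    rw [mul_left_comm, ← mul_add, ← mul_add, ← ENNReal.ofReal_mul (by linarith),
      ← ENNReal.ofReal_add (by positivity) (sq_nonneg _),
      ← ENNReal.ofReal_add (by positivity) (sq_nonneg _)]
    congr 2
    ring
  calc ENNReal.ofReal (2*(1 + (n:ℝ)*(b-1))*(1 + (n:ℝ)*(b-1)))
        + ∑' c, morris b n c * ENNReal.ofReal ((b^c - (1 + (n:ℝ)*(b-1)))^2)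
      = ENNReal.ofReal (2*(1 + (n:ℝ)*(b-1))) * ENNReal.ofReal (1 + (n:ℝ)*(b-1))
        + ∑' c, morris b n c * ENNReal.ofReal ((b^c - (1 + (n:ℝ)*(b-1)))^2) := by
        rw [← ENNReal.ofReal_mul (by linarith)]
    _ = ENNReal.ofReal (2*(1 + (n:ℝ)*(b-1))) * (∑' c, morris b n c * ENNReal.ofReal (b^c))
        + ∑' c, morris b n c * ENNReal.ofReal ((b^c - (1 + (n:ℝ)*(b-1)))^2) := by
        rw [M1 hb n]
    _ = ∑' c, (ENNReal.ofReal (2*(1 + (n:ℝ)*(b-1))) * (morris b n c * ENNReal.ofReal (b^c))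
        + morris b n c * ENNReal.ofReal ((b^c - (1 + (n:ℝ)*(b-1)))^2)) := by
        rw [ENNReal.tsum_add, ENNReal.tsum_mul_left]
    _ = ∑' c, (morris b n c * ENNReal.ofReal (b^(2*c))
        + morris b n c * ENNReal.ofReal ((1 + (n:ℝ)*(b-1))^2)) := by
        simp_rw [hpt]
    _ = ENNReal.ofReal (1 + n * (b^2 - 1) + (b^2-1)*(b-1)*((n:ℝ)*((n:ℝ)-1))/2)
        + ENNReal.ofReal ((1 + (n:ℝ)*(b-1))^2) := by
        rw [ENNReal.tsum_add, M2 hb n, tsum_const]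
    _ = ENNReal.ofReal (2*(1 + (n:ℝ)*(b-1))*(1 + (n:ℝ)*(b-1)))
        + ENNReal.ofReal ((b-1)^3 * ((n:ℝ)*((n:ℝ)-1))/2) := by
        rw [← ENNReal.ofReal_add (by nlinarith [nat_pred_nonneg n, Nat.cast_nonneg (α := ℝ) n]) (sq_nonneg _),
          ← ENNReal.ofReal_add (by positivity) hVc]
        congr 1
        ring

end MorrisAux


open MorrisAux in

/-- For `ε, δ ∈ (0,1)`, `n ≥ 1`, and base `b = 1 + (εδ)²`: if `C ~ morris(b, n)` and
`ñ = (b^C - b)/(b - 1) + 1`, then `P(|ñ - n| > ε n) ≤ δ`. -/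
theorem stmt_12 (ε δ : ℝ) (hε0 : 0 < ε) (hε1 : ε < 1) (hδ0 : 0 < δ) (hδ1 : δ < 1)
    (n : ℕ) (hn : 1 ≤ n) (b : ℝ) (hb : b = 1 + (ε * δ) ^ 2) :
    (morris b n).toMeasure
      {c : ℕ | ε * n < |((b ^ c - b) / (b - 1) + 1) - n|}
      ≤ ENNReal.ofReal δ := by
  have hbm : b - 1 = (ε * δ)^2 := by rw [hb]; ring
  have hb1 : (1:ℝ) < b := by nlinarith [sq_nonneg (ε*δ), mul_pos hε0 hδ0]
  have hb0 : (0:ℝ) < b - 1 := by linarith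
  have hn1 : (1:ℝ) ≤ (n:ℝ) := by exact_mod_cast hn
  have hd0 : (0:ℝ) < ε * n * (b - 1) := by positivity
  have hd2 : (0:ℝ) < (ε * n * (b - 1))^2 := by positivity
  have hset : {c : ℕ | ε * n < |((b ^ c - b) / (b - 1) + 1) - n|}
      = {c : ℕ | ε * n * (b-1) < |b^c - (1 + (n:ℝ)*(b-1))|} := by
    ext c
    simp only [Set.mem_setOf_eq]
    have hrw : ((b ^ c - b) / (b - 1) + 1) - (n:ℝ) = (b^c - (1 + (n:ℝ)*(b-1)))/(b-1) := by
      field_simp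
      ring
    rw [hrw, abs_div, abs_of_pos hb0, lt_div_iff₀ hb0]
  rw [hset, PMF.toMeasure_apply _ MeasurableSet.of_discrete]
  calc ∑' x, Set.indicator {c : ℕ | ε * n * (b-1) < |b^c - (1 + (n:ℝ)*(b-1))|} (morris b n) x
      ≤ ∑' x, morris b n x
          * ENNReal.ofReal ((b^x - (1 + (n:ℝ)*(b-1)))^2 / (ε * n * (b-1))^2) := by
        refine ENNReal.tsum_le_tsum fun x => ?_
        by_cases hx : x ∈ {c : ℕ | ε * n * (b-1) < |b^c - (1 + (n:ℝ)*(b-1))|}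
        · rw [Set.indicator_of_mem hx]
          have hgt : ε * n * (b-1) < |b^x - (1 + (n:ℝ)*(b-1))| := hx
          have h1 : (1:ℝ≥0∞) ≤ ENNReal.ofReal ((b^x - (1 + (n:ℝ)*(b-1)))^2 / (ε * n * (b-1))^2) := by
            rw [show (1:ℝ≥0∞) = ENNReal.ofReal 1 by simp]
            apply ENNReal.ofReal_le_ofReal
            rw [le_div_iff₀ hd2, one_mul]
            nlinarith [abs_nonneg (b^x - (1 + (n:ℝ)*(b-1))), sq_abs (b^x - (1 + (n:ℝ)*(b-1)))]
          calc (morris b n) x = morris b n x * 1 := (mul_one _).symm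
            _ ≤ _ := mul_le_mul_right h1 _
        · rw [Set.indicator_of_notMem hx]; exact zero_le
    _ = ENNReal.ofReal (((b-1)^3 * ((n:ℝ)*((n:ℝ)-1))/2) / (ε * n * (b-1))^2) := by
        simp_rw [ENNReal.ofReal_div_of_pos hd2, div_eq_mul_inv, ← mul_assoc]
        rw [ENNReal.tsum_mul_right, Mvar hb1.le n]
        congr 2
        ring
    _ ≤ ENNReal.ofReal δ := by
        apply ENNReal.ofReal_le_ofReal
        rw [div_le_iff₀ hd2, hbm]
        have key : δ * ((n:ℝ)*((n:ℝ)-1))/2 ≤ (n:ℝ)^2 := by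
          nlinarith [nat_pred_nonneg n]
        calc ((ε*δ)^2)^3 * ((n:ℝ)*((n:ℝ)-1))/2
            = (ε^6*δ^5) * (δ * ((n:ℝ)*((n:ℝ)-1))/2) := by ring
          _ ≤ (ε^6*δ^5) * (n:ℝ)^2 := mul_le_mul_of_nonneg_left key (by positivity)
          _ = δ * (ε * (n:ℝ) * (ε*δ)^2)^2 := by ring
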